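/- Let X = Y × F be a product of complex manifolds with a Kähler metric g such that the splitting T_X = pr₁*T_Y ⊕ pr₂*T_F is g-orthogonal and both summands are preserved by the Chern connection D of (T_X, g). Then for any local holomorphic vector field w on F, the norm |pr₂*w|_g is constant along each fiber {p is fixed in F}: Y × {p}; consequently the restriction of g to the F-factor is independent of the point of Y, and g₂ = pr₂* g_F for a metric g_F on F. -/

import Mathlib

/-!
STATEMENT 9.  Let `X = Y × F` carry a Kähler metric `g` such that the
splitting `T_X = pr₁*T_Y ⊕ pr₂*T_F` is `g`-orthogonal and both summands are
preserved by the Chern connection `D` of `(T_X, g)`.  Then for any holomorphic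
vector field `w` on `F`, the norm `|pr₂*w|_g` is constant along each slice
`Y × {p}`; consequently the restriction of `g` to the `F`-factor is
independent of the point of `Y`, i.e. `g₂ = pr₂* g_F` for a metric `g_F` on
`F`.

Model: `Y`, `F` are complex normed spaces (charts), the tangent bundle of
`X = Y × F` is trivialized, the metric is a field of hermitian inner products
`g x : T_X × T_X → ℂ`, the horizontal (resp. vertical) subbundle is
`Y × 0` (resp. `0 × F`), and the connection `D : (u, w) ↦ D_u w` is given as
data; the Kähler hypothesis is encoded by the torsion-freeness of `D`
(`[u₁,u₂] = D_{u₁}u₂ − D_{u₂}u₁`, with `VectorField.lieBracket`) together with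
its compatibility with `g`.
-/

theorem vertical_metric_independent_of_base
    {Y F : Type*} [NormedAddCommGroup Y] [NormedSpace ℂ Y]
    [NormedAddCommGroup F] [NormedSpace ℂ F]
    -- the hermitian metric `g` on `T_X`, `X = Y × F`
    (g : Y × F → (Y × F) → (Y × F) → ℂ)
    (hsesq : ∀ x, ∀ b : Y × F, IsLinearMap ℂ fun a => g x a b)
    (hherm : ∀ x a b, g x a b = (starRingEnd ℂ) (g x b a))
    (hpos : ∀ x a, a ≠ 0 → 0 < (g x a a).re)
    -- the Chern connection `D` of `(T_X, g)`
    (D : (Y × F → Y × F) → (Y × F → Y × F) → (Y × F → Y × F))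
    -- torsion-freeness (the metric `g` is Kähler)
    (htor : ∀ u w : Y × F → Y × F, Differentiable ℝ u → Differentiable ℝ w →
      ∀ x, VectorField.lieBracket ℝ u w x = D u w x - D w u x)
    -- compatibility with the metric
    (hmetric : ∀ (u f₁ f₂ : Y × F → Y × F), Differentiable ℝ f₁ →
      Differentiable ℝ f₂ → ∀ x,
      fderiv ℝ (fun y => g y (f₁ y) (f₂ y)) x (u x) =
        g x (D u f₁ x) (f₂ x) + g x (f₁ x) (D u f₂ x))
    -- `D` preserves the vertical subbundle `pr₂*T_F` …
    (hvert : ∀ u w : Y × F → Y × F, (∀ x, (w x).1 = 0) →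
      ∀ x, (D u w x).1 = 0)
    -- … and the horizontal subbundle `pr₁*T_Y`
    (hhor : ∀ u w : Y × F → Y × F, (∀ x, (w x).2 = 0) →
      ∀ x, (D u w x).2 = 0)
    -- the splitting `T_X = pr₁*T_Y ⊕ pr₂*T_F` is `g`-orthogonal
    (horth : ∀ x (a : Y) (b : F), g x (a, 0) (0, b) = 0) :
    -- `|pr₂*w|_g` is constant along each `Y × {p}` …
    (∀ w : F → F, Differentiable ℂ w → ∀ (p : F) (y y' : Y),
      g (y, p) (0, w p) (0, w p) = g (y', p) (0, w p) (0, w p)) ∧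
    -- … and `g₂ = pr₂* g_F` for a metric `g_F` on `F`
    (∃ gF : F → F → F → ℂ, ∀ (y : Y) (f : F) (b b' : F),
      g (y, f) (0, b) (0, b') = gF f b b') := by
  classical
  -- elementary algebraic facts about g
  have gzero_left : ∀ x v, g x 0 v = 0 := fun x v => (hsesq x v).map_zero
  have gzero_right : ∀ x v, g x v 0 = 0 := by
    intro x v
    rw [hherm, gzero_left]; simp
  -- Step A : D of a constant vertical field along a constant horizontal field vanishes
  have hDc : ∀ (a : Y) (b : F) (x : Y × F),
      D (fun _ => (a, 0)) (fun _ => ((0 : Y), b)) x = 0 := by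
    intro a b x
    have hu : Differentiable ℝ (fun _ : Y × F => (a, (0 : F))) := differentiable_const _
    have hw : Differentiable ℝ (fun _ : Y × F => ((0 : Y), b)) := differentiable_const _
    have h := htor _ _ hu hw x
    have hlie : VectorField.lieBracket ℝ (fun _ : Y × F => (a, (0:F)))
        (fun _ : Y × F => ((0 : Y), b)) x = 0 := by
      simp [VectorField.lieBracket]
    rw [hlie] at h
    have heq : D (fun _ => (a, 0)) (fun _ => ((0 : Y), b)) x
        = D (fun _ => ((0 : Y), b)) (fun _ => (a, 0)) x := by
      have := h.symm
      rwa [sub_eq_zero] at this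
    have h1 : (D (fun _ => (a, 0)) (fun _ => ((0 : Y), b)) x).1 = 0 :=
      hvert _ _ (fun _ => rfl) x
    have h2 : (D (fun _ => ((0 : Y), b)) (fun _ => (a, 0)) x).2 = 0 :=
      hhor _ _ (fun _ => rfl) x
    have : (D (fun _ => (a, 0)) (fun _ => ((0 : Y), b)) x).2 = 0 := by rw [heq]; exact h2
    exact Prod.ext h1 this
  -- (☆) : horizontal derivative of a "vertical" coefficient of g vanishes (junk or not)
  have hstar : ∀ (b b' : F) (x : Y × F) (a : Y),
      fderiv ℝ (fun z => g z ((0 : Y), b) ((0 : Y), b')) x (a, 0) = 0 := by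
    intro b b' x a
    have := hmetric (fun _ => (a, 0)) (fun _ => ((0 : Y), b)) (fun _ => ((0 : Y), b'))
      (differentiable_const _) (differentiable_const _) x
    rw [hDc, hDc, gzero_left, gzero_right] at this
    simpa using this
  -- main work under Nontrivial Y
  rcases subsingleton_or_nontrivial Y with hY | hY
  · constructor
    · intro w _ p y y'
      rw [Subsingleton.elim y y']
    · rcases isEmpty_or_nonempty Y with hE | hE
      · exact ⟨fun _ _ _ => 0, fun y => (IsEmpty.false y).elim⟩
      · obtain ⟨y₀⟩ := hE
        exact ⟨fun f b b' => g (y₀, f) (0, b) (0, b'),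
          fun y f b b' => by rw [Subsingleton.elim y y₀]⟩
  · -- Step C : the diagonal coefficient Q_b is differentiable everywhere
    have hQdiff : ∀ (b : F), b ≠ 0 → ∀ x₀ : Y × F,
        DifferentiableAt ℝ (fun z => g z ((0 : Y), b) ((0 : Y), b)) x₀ := by
      intro b hb x₀
      by_contra hnd
      obtain ⟨a, ha⟩ := exists_ne (0 : Y)
      obtain ⟨φ, -, hφa⟩ := exists_dual_vector ℝ a (norm_ne_zero_iff.mpr ha)
      set Q : Y × F → ℂ := fun z => g z ((0 : Y), b) ((0 : Y), b) with hQ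
      set Lc : (Y × F) →L[ℝ] ℂ :=
        Complex.ofRealCLM.comp (φ.comp (ContinuousLinearMap.fst ℝ Y F)) with hLc
      set c : ℂ := 2 - Lc x₀ with hc
      set μ : Y × F → ℂ := fun z => c + Lc z with hμ
      have hμderiv : ∀ z, HasFDerivAt μ Lc z := fun z => (Lc.hasFDerivAt).const_add c
      have hμdiff : Differentiable ℝ μ := fun z => (hμderiv z).differentiableAt
      have hμx₀ : μ x₀ = 2 := by simp [hμ, hc]
      set wμ : Y × F → Y × F := fun z => ((0 : Y), μ z • b) with hwμ
      have hwderiv : ∀ z, HasFDerivAt wμ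
          (((0 : (Y × F) →L[ℝ] Y)).prod (Lc.smulRight b)) z := by
        intro z
        exact HasFDerivAt.prodMk (hasFDerivAt_const (0 : Y) z) ((hμderiv z).smul_const b)
      have hwdiff : Differentiable ℝ wμ := fun z => (hwderiv z).differentiableAt
      -- compute D u wμ at x₀ via torsion-freeness
      set u : Y × F → Y × F := fun _ => (a, (0 : F)) with hu
      have hudiff : Differentiable ℝ u := differentiable_const _
      have htor' := htor u wμ hudiff hwdiff x₀
      have hlie : VectorField.lieBracket ℝ u wμ x₀ = ((0 : Y), (φ a : ℂ) • b) := by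
        rw [VectorField.lieBracket, (hwderiv x₀).fderiv]
        simp [hu, hLc]
      rw [hlie] at htor'
      have h1 : (D u wμ x₀).1 = 0 := hvert _ _ (fun z => rfl) x₀
      have h2 : (D wμ u x₀).2 = 0 := hhor _ _ (fun z => rfl) x₀
      have hDuw : D u wμ x₀ = ((0 : Y), (φ a : ℂ) • b) := by
        have hfst : (0 : Y) = (D u wμ x₀).1 - (D wμ u x₀).1 := congrArg Prod.fst htor'
        have hsnd : (φ a : ℂ) • b = (D u wμ x₀).2 - (D wμ u x₀).2 := congrArg Prod.snd htor'
        rw [h1] at hfst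
        rw [h2, sub_zero] at hsnd
        exact Prod.ext h1 hsnd.symm
      -- the metric compatibility identity for (u, wμ, const)
      have hmet := hmetric u wμ (fun _ => ((0 : Y), b)) hwdiff (differentiable_const _) x₀
      rw [hDuw, hDc, gzero_right, add_zero] at hmet
      -- rewrite the function whose derivative is taken
      have hfun : (fun z => g z (wμ z) ((0 : Y), b)) = fun z => μ z * Q z := by
        funext z
        have h1 : ((0 : Y), μ z • b) = μ z • ((0 : Y), b) := by
          simp [Prod.smul_def]
        show g z ((0 : Y), μ z • b) ((0 : Y), b) = μ z * Q z
        rw [h1, (hsesq z _).map_smul]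
        rfl
      rw [hfun] at hmet
      -- `μ * Q` is not differentiable at x₀ either
      have hμQnd : ¬ DifferentiableAt ℝ (fun z => μ z * Q z) x₀ := by
        intro hd
        apply hnd
        have hμne : μ x₀ ≠ 0 := by rw [hμx₀]; norm_num
        have hinv : DifferentiableAt ℝ (fun z => (μ z)⁻¹) x₀ := (hμdiff x₀).inv hμne
        have hprod : DifferentiableAt ℝ (fun z => (μ z)⁻¹ * (μ z * Q z)) x₀ := hinv.mul hd
        apply hprod.congr_of_eventuallyEq
        have hev : ∀ᶠ z in nhds x₀, μ z ≠ 0 :=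
          (hμdiff x₀).continuousAt.eventually_ne hμne
        filter_upwards [hev] with z hz
        field_simp
      rw [fderiv_zero_of_not_differentiableAt hμQnd] at hmet
      -- conclude Q x₀ = 0, contradicting positivity
      have hφne : (φ a : ℂ) ≠ 0 := by
        rw [hφa]
        simpa using norm_ne_zero_iff.mpr ha
      have hQ0 : Q x₀ = 0 := by
        have hsm : ((0 : Y), (φ a : ℂ) • b) = (φ a : ℂ) • ((0 : Y), b) := by
          simp [Prod.smul_def]
        rw [hsm, (hsesq x₀ _).map_smul] at hmet
        have h0 : (0 : ℂ) = (φ a : ℂ) * Q x₀ := by simpa using hmet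
        rcases mul_eq_zero.mp h0.symm with h | h
        · exact absurd h hφne
        · exact h
      have hbne : ((0 : Y), b) ≠ (0 : Y × F) := by
        simp [Prod.ext_iff, hb]
      have hp := hpos x₀ _ hbne
      have hQ0' : g x₀ ((0 : Y), b) ((0 : Y), b) = 0 := hQ0
      rw [hQ0'] at hp
      simp at hp
    -- Step B : constancy of the diagonal coefficient along horizontal slices
    have key : ∀ (b : F) (p : F) (y y' : Y),
        g (y, p) ((0 : Y), b) ((0 : Y), b) = g (y', p) ((0 : Y), b) ((0 : Y), b) := by
      intro b p y y'
      by_cases hb : b = 0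
      · subst hb
        have h0 : ((0 : Y), (0 : F)) = (0 : Y × F) := rfl
        rw [h0, gzero_left, gzero_left]
      · set Q : Y × F → ℂ := fun z => g z ((0 : Y), b) ((0 : Y), b) with hQ
        set θ : Y → ℂ := fun y => Q (y, p) with hθ
        have hι : ∀ y : Y, HasFDerivAt (fun y : Y => ((y, p) : Y × F))
            (ContinuousLinearMap.inl ℝ Y F) y := fun y => hasFDerivAt_prodMk_left y p
        have hθderiv : ∀ y : Y, HasFDerivAt θ
            ((fderiv ℝ Q (y, p)).comp (ContinuousLinearMap.inl ℝ Y F)) y := by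
          intro y
          exact ((hQdiff b hb (y, p)).hasFDerivAt).comp y (hι y)
        have hθdiff : Differentiable ℝ θ := fun y => (hθderiv y).differentiableAt
        have hθfderiv : ∀ y : Y, fderiv ℝ θ y = 0 := by
          intro y
          rw [(hθderiv y).fderiv]
          ext v
          simpa using hstar b b (y, p) v
        exact is_const_of_fderiv_eq_zero hθdiff hθfderiv y y'
    -- polarization : the off-diagonal coefficients in terms of diagonal ones
    have hadd2 : ∀ x (u v w : Y × F), g x u (v + w) = g x u v + g x u w := by
      intro x u v w
      rw [hherm x u (v + w), (hsesq x u).map_add, map_add, ← hherm, ← hherm]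
    have hsmul2 : ∀ x (u v : Y × F) (c : ℂ), g x u (c • v) = (starRingEnd ℂ) c * g x u v := by
      intro x u v c
      rw [hherm x u (c • v), (hsesq x u).map_smul, smul_eq_mul, map_mul, ← hherm]
    have hpol : ∀ (x : Y × F) (v w : F),
        g x ((0 : Y), v) ((0 : Y), w) =
          (g x (0, v + w) (0, v + w) - g x (0, v - w) (0, v - w)
            + Complex.I * g x (0, v + Complex.I • w) (0, v + Complex.I • w)
            - Complex.I * g x (0, v - Complex.I • w) (0, v - Complex.I • w)) / 4 := by
      intro x v w
      have e1 : ∀ (c : ℂ), ((0 : Y), v + c • w) = ((0 : Y), v) + c • ((0 : Y), w) := by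
        intro c; simp [Prod.ext_iff]
      have e2 : ∀ (c : ℂ), ((0 : Y), v - c • w) = ((0 : Y), v) - c • ((0 : Y), w) := by
        intro c; simp [Prod.ext_iff]
      have e1' : ((0 : Y), v + w) = ((0 : Y), v) + ((0 : Y), w) := by simp [Prod.ext_iff]
      have e2' : ((0 : Y), v - w) = ((0 : Y), v) - ((0 : Y), w) := by simp [Prod.ext_iff]
      set p : Y × F := ((0 : Y), v)
      set q : Y × F := ((0 : Y), w)
      have hexp : ∀ (c : ℂ), g x (p + c • q) (p + c • q)
          = g x p p + c * g x q p + (starRingEnd ℂ) c * g x p q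
            + (c * (starRingEnd ℂ) c) * g x q q := by
        intro c
        rw [(hsesq x _).map_add, (hsesq x _).map_smul, hadd2, hadd2, hsmul2, hsmul2]
        simp only [smul_eq_mul]
        ring
      have hexp' : ∀ (c : ℂ), g x (p - c • q) (p - c • q)
          = g x p p - c * g x q p - (starRingEnd ℂ) c * g x p q
            + (c * (starRingEnd ℂ) c) * g x q q := by
        intro c
        have : p - c • q = p + (-c) • q := by rw [neg_smul, ← sub_eq_add_neg]
        rw [this, hexp]
        simp
        ring
      have h1 : g x (p + (1:ℂ) • q) (p + (1:ℂ) • q) = g x (0, v + w) (0, v + w) := by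
        rw [one_smul, ← e1']
      have h2 : g x (p - (1:ℂ) • q) (p - (1:ℂ) • q) = g x (0, v - w) (0, v - w) := by
        rw [one_smul, ← e2']
      rw [← h1, ← h2, e1 Complex.I, e2 Complex.I, hexp, hexp', hexp, hexp']
      have hIconj : (starRingEnd ℂ) Complex.I = -Complex.I := Complex.conj_I
      rw [hIconj]
      simp only [map_one, one_mul, mul_one]
      have hII : Complex.I * Complex.I = -1 := Complex.I_mul_I
      field_simp
      ring_nf
      rw [Complex.I_sq]
      ring
    -- conclusion
    constructor
    · intro w _ p y y'
      exact key (w p) p y y'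
    · have hne : Nonempty Y := inferInstance
      obtain ⟨y₀⟩ := hne
      refine ⟨fun f b b' => g (y₀, f) (0, b) (0, b'), fun y f b b' => ?_⟩
      show g (y, f) (0, b) (0, b') = g (y₀, f) (0, b) (0, b')
      rw [hpol (y, f) b b', hpol (y₀, f) b b',
        key (b + b') f y y₀, key (b - b') f y y₀,
        key (b + Complex.I • b') f y y₀, key (b - Complex.I • b') f y y₀]
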